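/- Let n, m, p ∈ ℕ, let A be a real n×n matrix, B a real n×m matrix, K a real m×n matrix, L a real n×p matrix, and C a real p×n matrix. Assume every complex root of the characteristic polynomial of A + BK has negative real part, and every complex root of the characteristic polynomial of A − LC has negative real part. Suppose x, z : ℝ → ℝⁿ are differentiable and satisfy ẋ(t) = A x(t) + B K z(t) and ż(t) = A z(t) + B K z(t) + L (C x(t) − C z(t)) for all t ≥ 0. Then x(t) → 0 and z(t) → 0 as t → ∞. -/

import Mathlib

open Matrix Filter Polynomial NormedSpace Module
open scoped Topology

attribute [local instance] Matrix.linftyOpNormedAddCommGroup Matrix.linftyOpNormedRing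
  Matrix.linftyOpNormedAlgebra Matrix.linftyOpNormedSpace

namespace SepAux

lemma pow_mul_exp_tendsto (k : ℕ) {c : ℝ} (hc : c < 0) :
    Tendsto (fun t : ℝ => t ^ k * Real.exp (c * t)) atTop (𝓝 0) := by
  have h1 : Tendsto (fun t : ℝ => (-c * t) ^ k * Real.exp (-(-c * t))) atTop (𝓝 0) :=
    (Real.tendsto_pow_mul_exp_neg_atTop_nhds_zero k).comp
      (tendsto_id.const_mul_atTop (by linarith))
  have h2 := h1.const_mul (((-c) ^ k)⁻¹)
  rw [mul_zero] at h2
  refine h2.congr fun t => ?_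
  have hck : ((-c) ^ k) ≠ 0 := pow_ne_zero _ (by linarith)
  rw [mul_pow]
  field_simp

variable {ι : Type*} [Fintype ι] [DecidableEq ι]

/-- mulVec by a fixed vector, as a continuous linear map in the matrix argument. -/
noncomputable def mulVecCLM (w : ι → ℂ) : Matrix ι ι ℂ →L[ℂ] (ι → ℂ) :=
  LinearMap.toContinuousLinearMap
    { toFun := fun E : Matrix ι ι ℂ => E.mulVec w
      map_add' := fun E F => Matrix.add_mulVec E F w
      map_smul' := fun c E => Matrix.smul_mulVec c E w }

@[simp] lemma mulVecCLM_apply (w : ι → ℂ) (E : Matrix ι ι ℂ) :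
    mulVecCLM w E = E.mulVec w := rfl

end SepAux

namespace SepAux2
variable {ι : Type*} [Fintype ι] [DecidableEq ι]
open SepAux

lemma exp_mulVec_tendsto_zero (M : Matrix ι ι ℂ)
    (hM : ∀ μ : ℂ, M.charpoly.IsRoot μ → μ.re < 0) (v : ι → ℂ) :
    Tendsto (fun t : ℝ => (exp ((t : ℂ) • M)).mulVec v) atTop (𝓝 0) := by
  set f : Module.End ℂ (ι → ℂ) := Matrix.toLinAlgEquiv' M with hfdef
  have hfM : f = Matrix.toLin' M := rfl
  have hcp : LinearMap.charpoly f = M.charpoly := by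
    rw [← LinearMap.charpoly_toMatrix f (Pi.basisFun ℂ ι), LinearMap.toMatrix_eq_toMatrix',
      hfM, LinearMap.toMatrix'_toLin']
  have hv : v ∈ ⨆ μ : ℂ, f.maxGenEigenspace μ := by
    rw [Module.End.iSup_maxGenEigenspace_eq_top]; trivial
  refine Submodule.iSup_induction _
    (motive := fun v => Tendsto (fun t : ℝ => (exp ((t : ℂ) • M)).mulVec v) atTop (𝓝 0)) hv ?_ ?_ ?_
  · rintro μ w hw
    by_cases hw0 : w = 0
    · subst hw0; simpa [Matrix.mulVec_zero] using tendsto_const_nhds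
    obtain ⟨k, hk⟩ := (Module.End.mem_maxGenEigenspace f μ w).mp hw
    -- μ is an eigenvalue, hence a root of the charpoly, hence Re μ < 0
    have hgen : f.HasGenEigenvalue μ k := by
      rw [Module.End.HasGenEigenvalue, Module.End.HasUnifEigenvalue, Submodule.ne_bot_iff]
      exact ⟨w, (Module.End.mem_genEigenspace_nat).mpr hk, hw0⟩
    have heig : f.HasEigenvalue μ := Module.End.hasEigenvalue_of_hasGenEigenvalue hgen
    have hre : μ.re < 0 := by
      refine hM μ ?_
      have h1 : (minpoly ℂ f).IsRoot μ := Module.End.hasEigenvalue_iff_isRoot.mp heig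
      have h2 : minpoly ℂ f ∣ LinearMap.charpoly f := LinearMap.minpoly_dvd_charpoly f
      rw [← hcp]
      exact h1.dvd h2
    -- translate the generalized eigenvector equation to matrices
    set N : Matrix ι ι ℂ := M - μ • 1 with hNdef
    have hNk : (N ^ k).mulVec w = 0 := by
      have : Matrix.toLinAlgEquiv' (N ^ k) = (f - μ • 1) ^ k := by
        rw [map_pow, map_sub, _root_.map_smul, _root_.map_one]
      calc (N ^ k).mulVec w = (Matrix.toLinAlgEquiv' (N ^ k)) w := by
            rw [Matrix.toLinAlgEquiv'_apply]
        _ = ((f - μ • 1) ^ k) w := by rw [this]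
        _ = 0 := hk
    have hNj : ∀ j, k ≤ j → (N ^ j).mulVec w = 0 := by
      intro j hj
      have : N ^ j = N ^ (j - k) * N ^ k := by rw [← pow_add]; congr 1; omega
      rw [this, ← Matrix.mulVec_mulVec, hNk, Matrix.mulVec_zero]
    -- the explicit formula for exp (t • M) *ᵥ w
    have hformula : ∀ t : ℝ, (exp ((t : ℂ) • M)).mulVec w
        = ∑ j ∈ Finset.range k,
            (Complex.exp ((t : ℂ) * μ) * ((j.factorial : ℂ)⁻¹ * (t : ℂ) ^ j)) •
              ((N ^ j).mulVec w) := by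
      intro t
      have hsplit : (t : ℂ) • M
          = algebraMap ℂ (Matrix ι ι ℂ) ((t : ℂ) * μ) + (t : ℂ) • N := by
        rw [Algebra.algebraMap_eq_smul_one, hNdef, smul_sub, ← smul_smul]
        abel
      have hcomm : Commute (algebraMap ℂ (Matrix ι ι ℂ) ((t : ℂ) * μ)) ((t : ℂ) • N) :=
        Algebra.commutes _ _
      have hexp : exp ((t : ℂ) • M)
          = Complex.exp ((t : ℂ) * μ) • exp ((t : ℂ) • N) := by
        rw [hsplit]
        erw [NormedSpace.exp_add_of_commute hcomm]
        rw [← NormedSpace.algebraMap_exp_comm,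
          ← Complex.exp_eq_exp_ℂ, ← Algebra.smul_def]
        rfl
      have hexpN : (exp ((t : ℂ) • N)).mulVec w
          = ∑ j ∈ Finset.range k, ((j.factorial : ℂ)⁻¹ * (t : ℂ) ^ j) • ((N ^ j).mulVec w) := by
        have hsum : (exp ((t : ℂ) • N)).mulVec w
            = ∑' j : ℕ, ((j.factorial : ℂ)⁻¹ : ℂ) • (((t : ℂ) • N) ^ j).mulVec w := by
          rw [exp_eq_tsum ℂ]
          have := (mulVecCLM w).map_tsum (expSeries_summable' (𝕂 := ℂ) ((t : ℂ) • N))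
          simpa using this
        rw [hsum]
        rw [tsum_eq_sum (s := Finset.range k) ?_]
        · refine Finset.sum_congr rfl fun j hj => ?_
          rw [_root_.smul_pow, Matrix.smul_mulVec, smul_smul]
        · intro j hj
          have hj' : k ≤ j := Nat.le_of_not_lt (fun h => hj (Finset.mem_range.mpr h))
          rw [_root_.smul_pow, Matrix.smul_mulVec, hNj j hj', smul_zero, smul_zero]
      rw [hexp, Matrix.smul_mulVec, hexpN, Finset.smul_sum]
      refine Finset.sum_congr rfl fun j hj => ?_
      rw [smul_smul]
    refine Tendsto.congr (fun t => (hformula t).symm) ?_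
    have hterm : ∀ j : ℕ, Tendsto (fun t : ℝ =>
        (Complex.exp ((t : ℂ) * μ) * ((j.factorial : ℂ)⁻¹ * (t : ℂ) ^ j)) •
          ((N ^ j).mulVec w)) atTop (𝓝 0) := by
      intro j
      have hsc : Tendsto (fun t : ℝ =>
          Complex.exp ((t : ℂ) * μ) * ((j.factorial : ℂ)⁻¹ * (t : ℂ) ^ j)) atTop (𝓝 0) := by
        have hg : Tendsto (fun t : ℝ =>
            (j.factorial : ℝ)⁻¹ * (t ^ j * Real.exp (μ.re * t))) atTop (𝓝 0) := by
          simpa using (pow_mul_exp_tendsto j hre).const_mul ((j.factorial : ℝ)⁻¹)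
        refine squeeze_zero_norm' ?_ hg
        filter_upwards [eventually_ge_atTop (0 : ℝ)] with t ht
        have h1 : ‖Complex.exp ((t : ℂ) * μ) * ((j.factorial : ℂ)⁻¹ * (t : ℂ) ^ j)‖
            = Real.exp (t * μ.re) * ((j.factorial : ℝ)⁻¹ * t ^ j) := by
          rw [norm_mul, norm_mul, Complex.norm_exp, norm_pow]
          simp [Complex.mul_re, abs_of_nonneg ht]
        rw [h1]; ring_nf; exact le_of_eq (by ring)
      have := hsc.smul_const ((N ^ j).mulVec w)
      simpa using this
    have hsum := tendsto_finset_sum (Finset.range k) (fun j _ => hterm j)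
    simpa using hsum
  · simpa [Matrix.mulVec_zero] using tendsto_const_nhds
  · intro a b ha hb
    have := ha.add hb
    rw [add_zero] at this
    refine this.congr fun t => ?_
    rw [Matrix.mulVec_add]

lemma hurwitz_tendsto_zero (M : Matrix ι ι ℝ)
    (hM : ∀ μ : ℂ, (M.charpoly.map (algebraMap ℝ ℂ)).IsRoot μ → μ.re < 0)
    (w : ℝ → ι → ℝ) (hw : ∀ t : ℝ, 0 ≤ t → HasDerivAt w (M.mulVec (w t)) t) :
    Tendsto w atTop (𝓝 0) := by
  set Mc : Matrix ι ι ℂ := M.map (algebraMap ℝ ℂ) with hMcdef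
  have hMc' : ∀ μ : ℂ, Mc.charpoly.IsRoot μ → μ.re < 0 := by
    intro μ hμ
    exact hM μ (by rwa [← Matrix.charpoly_map])
  set W : ℝ → ι → ℂ := fun t i => ((w t i : ℝ) : ℂ) with hWdef
  have hWd : ∀ t : ℝ, 0 ≤ t → HasDerivAt W (Mc.mulVec (W t)) t := by
    intro t ht
    rw [hasDerivAt_pi]
    intro i
    have hi := hasDerivAt_pi.mp (hw t ht) i
    have h2 := Complex.ofRealCLM.hasFDerivAt.comp_hasDerivAt t hi
    convert h2 using 1
    · rfl
    simp [hMcdef, hWdef, Matrix.mulVec, dotProduct, Matrix.map_apply]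
  set g : ℝ → ι → ℂ := fun t => (exp ((t : ℂ) • Mc)).mulVec (W 0) with hgdef
  have hgd : ∀ t : ℝ, HasDerivAt g (Mc.mulVec (g t)) t := by
    intro t
    have h1 : HasDerivAt (fun u : ℂ => exp (u • Mc)) (Mc * exp ((t : ℂ) • Mc)) (t : ℂ) :=
      hasDerivAt_exp_smul_const' Mc (t : ℂ)
    have h2 : HasDerivAt (fun u : ℝ => exp ((u : ℂ) • Mc)) (Mc * exp ((t : ℂ) • Mc)) t := by
      have hor : HasDerivAt (fun u : ℝ => (u : ℂ)) (1 : ℂ) t := by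
        have := Complex.ofRealCLM.hasDerivAt (x := t)
        exact this
      have hs := HasDerivAt.scomp (𝕜 := ℝ) (𝕜' := ℂ) (x := t)
        (F := Matrix ι ι ℂ) (g₁ := fun u : ℂ => exp (u • Mc))
        (h := fun u : ℝ => (u : ℂ)) h1 hor
      rw [show Mc * exp ((t : ℂ) • Mc) = (1 : ℂ) • (Mc * exp ((t : ℂ) • Mc)) from
        (one_smul _ _).symm]
      exact hs
    have h3 := ((mulVecCLM (W 0)).restrictScalars ℝ).hasFDerivAt.comp_hasDerivAt t h2
    convert h3 using 1
    iterate 3 rfl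
    · rfl
    simp [hgdef, Matrix.mulVec_mulVec]
    rfl
  have hkey : ∀ t : ℝ, 0 ≤ t → W t = g t := by
    intro b hb
    set T : (ι → ℂ) →L[ℂ] (ι → ℂ) := LinearMap.toContinuousLinearMap Mc.mulVecLin with hT
    have hlip : ∀ s : ℝ, LipschitzOnWith ‖T‖₊ ((fun _ y => Mc.mulVec y) s) Set.univ := by
      intro s
      refine LipschitzWith.lipschitzOnWith ?_
      have h := T.lipschitz
      have he : ⇑T = fun y : ι → ℂ => Mc.mulVec y := by
        funext y
        simp [hT, Matrix.mulVecLin_apply]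
      rwa [he] at h
    have huniq := ODE_solution_unique_of_mem_Icc_right (v := fun _ y => Mc.mulVec y)
      (s := fun _ => Set.univ) (fun t _ => hlip t)
      (f := W) (g := g) (a := 0) (b := b)
      (fun s hs => ((hWd s hs.1).continuousAt).continuousWithinAt)
      (fun s hs => (hWd s hs.1).hasDerivWithinAt)
      (fun _ _ => Set.mem_univ _)
      (fun s _ => ((hgd s).continuousAt).continuousWithinAt)
      (fun s _ => (hgd s).hasDerivWithinAt)
      (fun _ _ => Set.mem_univ _)
      (by simp [hgdef])
    exact huniq ⟨hb, le_rfl⟩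
  have hWlim : Tendsto W atTop (𝓝 0) := by
    have := exp_mulVec_tendsto_zero Mc hMc' (W 0)
    refine Tendsto.congr' ?_ this
    filter_upwards [eventually_ge_atTop (0 : ℝ)] with t ht
    exact (hkey t ht).symm
  rw [tendsto_pi_nhds]
  intro i
  have hWi : Tendsto (fun t => W t i) atTop (𝓝 0) := by
    have := tendsto_pi_nhds.mp hWlim i
    simpa using this
  have := (Complex.continuous_re.tendsto 0).comp hWi
  simpa [hWdef, Function.comp_def] using this

end SepAux2

open SepAux2 in
/-- Separation principle (asymptotic form): if `A + BK` and `A − LC` are Hurwitz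
(all complex roots of their characteristic polynomials have negative real part),
then the coupled controller–estimator trajectories `x` and `z` both tend to `0`. -/
theorem separation_principle_stability
    (n m p : ℕ)
    (A : Matrix (Fin n) (Fin n) ℝ)
    (B : Matrix (Fin n) (Fin m) ℝ)
    (K : Matrix (Fin m) (Fin n) ℝ)
    (L : Matrix (Fin n) (Fin p) ℝ)
    (C : Matrix (Fin p) (Fin n) ℝ)
    (hK : ∀ μ : ℂ, ((A + B * K).charpoly.map (algebraMap ℝ ℂ)).IsRoot μ → μ.re < 0)
    (hL : ∀ μ : ℂ, ((A - L * C).charpoly.map (algebraMap ℝ ℂ)).IsRoot μ → μ.re < 0)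
    (x z : ℝ → Fin n → ℝ)
    (hx : ∀ t : ℝ, 0 ≤ t →
      HasDerivAt x (A.mulVec (x t) + B.mulVec (K.mulVec (z t))) t)
    (hz : ∀ t : ℝ, 0 ≤ t →
      HasDerivAt z
        (A.mulVec (z t) + B.mulVec (K.mulVec (z t))
          + L.mulVec (C.mulVec (x t) - C.mulVec (z t))) t) :
    Tendsto x atTop (nhds 0) ∧ Tendsto z atTop (nhds 0) := by
  set e : ℝ → Fin n → ℝ := fun t => x t - z t with hedef
  set M : Matrix (Fin n ⊕ Fin n) (Fin n ⊕ Fin n) ℝ :=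
    Matrix.fromBlocks (A + B * K) (-(B * K)) 0 (A - L * C) with hMdef
  set W : ℝ → (Fin n ⊕ Fin n) → ℝ := fun t => Sum.elim (x t) (e t) with hWdef
  have hMW : ∀ t : ℝ, M.mulVec (W t)
      = Sum.elim (A.mulVec (x t) + B.mulVec (K.mulVec (z t)))
          ((A - L * C).mulVec (e t)) := by
    intro t
    have h1 : (A + B * K) *ᵥ (x t) + (-(B * K)) *ᵥ (e t)
        = A *ᵥ x t + B *ᵥ (K *ᵥ z t) := by
      simp only [hedef, Matrix.add_mulVec, Matrix.neg_mulVec, Matrix.mulVec_sub,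
        Matrix.mulVec_mulVec, neg_sub]
      abel
    have h2 : (0 : Matrix (Fin n) (Fin n) ℝ) *ᵥ (x t) + (A - L * C) *ᵥ (e t)
        = (A - L * C) *ᵥ (e t) := by
      rw [Matrix.zero_mulVec, zero_add]
    rw [hMdef, hWdef]
    rw [Matrix.fromBlocks_mulVec]
    rw [Sum.elim_comp_inl, Sum.elim_comp_inr]
    rw [h1, h2]
  have hed : ∀ t : ℝ, 0 ≤ t → HasDerivAt e ((A - L * C).mulVec (e t)) t := by
    intro t ht
    have hsub := (hx t ht).sub (hz t ht)
    convert hsub using 1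
    iterate 3 rfl
    · rfl
    simp only [hedef, Matrix.sub_mulVec, Matrix.mulVec_sub, Matrix.mulVec_mulVec]
    abel
  have hWd : ∀ t : ℝ, 0 ≤ t → HasDerivAt W (M.mulVec (W t)) t := by
    intro t ht
    rw [hasDerivAt_pi]
    rintro (i | i)
    · have hcomp := hasDerivAt_pi.mp (hx t ht) i
      rw [hMW t]
      simpa [hWdef] using hcomp
    · have hcomp := hasDerivAt_pi.mp (hed t ht) i
      rw [hMW t]
      simpa [hWdef] using hcomp
  have hHur : ∀ μ : ℂ, (M.charpoly.map (algebraMap ℝ ℂ)).IsRoot μ → μ.re < 0 := by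
    intro μ hμ
    rw [hMdef, Matrix.charpoly_fromBlocks_zero₂₁, Polynomial.map_mul] at hμ
    rw [Polynomial.IsRoot, Polynomial.eval_mul] at hμ
    rcases mul_eq_zero.mp hμ with h | h
    · exact hK μ h
    · exact hL μ h
  have hW := SepAux2.hurwitz_tendsto_zero M hHur W hWd
  have hxlim : Tendsto x atTop (𝓝 0) := by
    rw [tendsto_pi_nhds]
    intro i
    have := tendsto_pi_nhds.mp hW (Sum.inl i)
    simpa [hWdef] using this
  have helim : Tendsto e atTop (𝓝 0) := by
    rw [tendsto_pi_nhds]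
    intro i
    have := tendsto_pi_nhds.mp hW (Sum.inr i)
    simpa [hWdef] using this
  refine ⟨hxlim, ?_⟩
  have hzlim := hxlim.sub helim
  rw [sub_zero] at hzlim
  refine hzlim.congr fun t => ?_
  rw [hedef]
  simp
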